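/- Given a tuple of nonnegative integers (b_1, ..., b_n) with even sum, there exists a tuple of integers (c_1, ..., c_n) satisfying 0 ≤ c_i ≤ b_i for all i, the balancedness condition ∑_{i=1}^n c_i = (1/2)∑_{i=1}^n b_i, and the dominance condition ∑_{j=1}^i c_j ≤ (1/2)(c_i + ∑_{j=1}^{i-1} b_j) for all i = 1, ..., n, if and only if no single b_i exceeds half the total sum, i.e., b_i ≤ (1/2)∑_{j=1}^n b_j for all i. -/
import Mathlib

def Pb (n : ℕ) (b : Fin n → ℕ) (m : ℕ) : ℕ :=
  ∑ k ∈ Finset.range m, (if hk : k < n then b ⟨k, hk⟩ else 0)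

lemma Pb_mono (n : ℕ) (b : Fin n → ℕ) : Monotone (Pb n b) := by
  intro x y hxy
  exact Finset.sum_le_sum_of_subset (Finset.range_subset_range.2 hxy)

lemma Pb_succ (n : ℕ) (b : Fin n → ℕ) (i : Fin n) :
    Pb n b (↑i + 1) = Pb n b ↑i + b i := by
  unfold Pb
  rw [Finset.sum_range_succ]
  simp [i.isLt]

lemma Pb_top (n : ℕ) (b : Fin n → ℕ) : Pb n b n = ∑ i, b i := by
  unfold Pb
  rw [← Fin.sum_univ_eq_sum_range (fun k => if hk : k < n then b ⟨k, hk⟩ else 0) n]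
  exact Finset.sum_congr rfl (fun i _ => by simp [i.isLt])

lemma sum_filter_val_lt {n : ℕ} (F : ℕ → ℕ) (m : ℕ) (hm : m ≤ n) :
    ∑ j ∈ Finset.univ.filter (fun j : Fin n => (j : ℕ) < m), F (j : ℕ) =
      ∑ k ∈ Finset.range m, F k := by
  refine (Finset.sum_bij
    (fun (a : ℕ) (ha : a ∈ Finset.range m) =>
      (⟨a, lt_of_lt_of_le (Finset.mem_range.1 ha) hm⟩ : Fin n)) ?_ ?_ ?_ ?_).symm
  · intro a ha
    simp [Finset.mem_range.1 ha]
  · intro a ha a' ha' hEq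
    simpa using congrArg Fin.val hEq
  · intro j hj
    simp only [Finset.mem_filter, Finset.mem_univ, true_and] at hj
    exact ⟨(j : ℕ), Finset.mem_range.2 hj, rfl⟩
  · intro a ha
    rfl

lemma sum_prefix_c (n : ℕ) (b : Fin n → ℕ) (h m : ℕ) :
    ∑ k ∈ Finset.range m, (max (Pb n b (k + 1)) h - max (Pb n b k) h) =
      max (Pb n b m) h - h := by
  have hmono : Monotone (fun m => max (Pb n b m) h) :=
    fun x y hxy => max_le_max (Pb_mono n b hxy) le_rfl
  rw [Finset.sum_range_tsub hmono m]
  have : Pb n b 0 = 0 := by simp [Pb]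
  rw [this]
  simp

/-- Given a tuple of nonnegative integers `(b 1, …, b n)` with even sum, there exists a
tuple `(c 1, …, c n)` with `0 ≤ c i ≤ b i`, the balancedness condition
`∑ c i = (1/2) ∑ b i`, and the dominance condition
`∑_{j ≤ i} c j ≤ (1/2) (c i + ∑_{j < i} b j)` for all `i`, if and only if no single
`b i` exceeds half the total sum. -/
theorem stmt_0 (n : ℕ) (hn : 0 < n) (b : Fin n → ℕ) (heven : Even (∑ i, b i)) :
    (∃ c : Fin n → ℕ,
        (∀ i, c i ≤ b i) ∧
        2 * ∑ i, c i = ∑ i, b i ∧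
        ∀ i : Fin n,
          2 * ∑ j ∈ Finset.univ.filter (fun j => j ≤ i), c j ≤
            c i + ∑ j ∈ Finset.univ.filter (fun j => j < i), b j) ↔
    ∀ i, 2 * b i ≤ ∑ j, b j := by
  constructor
  · rintro ⟨c, hcb, hsum, hdom⟩ i
    have hins : Finset.univ.filter (fun j => j ≤ i) =
        insert i (Finset.univ.filter (fun j => j < i)) := by
      ext j
      simp only [Finset.mem_filter, Finset.mem_univ, true_and, Finset.mem_insert]
      constructor
      · intro hji; rcases eq_or_lt_of_le hji with hji | hji
        · exact Or.inl hji
        · exact Or.inr hji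
      · rintro (rfl | hji); · exact le_refl _
        · exact le_of_lt hji
    have hnm : i ∉ Finset.univ.filter (fun j => j < i) := by simp
    have hsplit : ∀ g : Fin n → ℕ,
        ∑ j, g j = ∑ j ∈ Finset.univ.filter (fun j => j ≤ i), g j +
          ∑ j ∈ Finset.univ.filter (fun j => ¬ j ≤ i), g j := by
      intro g
      exact (Finset.sum_filter_add_sum_filter_not _ _ _).symm
    have hic : ∑ j ∈ Finset.univ.filter (fun j => j ≤ i), c j =
        c i + ∑ j ∈ Finset.univ.filter (fun j => j < i), c j := by
      rw [hins, Finset.sum_insert hnm]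
    have hib : ∑ j ∈ Finset.univ.filter (fun j => j ≤ i), b j =
        b i + ∑ j ∈ Finset.univ.filter (fun j => j < i), b j := by
      rw [hins, Finset.sum_insert hnm]
    have htail : ∑ j ∈ Finset.univ.filter (fun j => ¬ j ≤ i), c j ≤
        ∑ j ∈ Finset.univ.filter (fun j => ¬ j ≤ i), b j :=
      Finset.sum_le_sum (fun j _ => hcb j)
    have h1 := hsplit c
    have h2 := hsplit b
    have h3 := hdom i
    omega
  · intro hb
    obtain ⟨h, hS⟩ := heven
    refine ⟨fun i => max (Pb n b (↑i + 1)) h - max (Pb n b ↑i) h, ?_, ?_, ?_⟩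
    · intro i
      show max (Pb n b (↑i + 1)) h - max (Pb n b ↑i) h ≤ b i
      have h1 := Pb_succ n b i
      omega
    · have h1 : ∑ i : Fin n, (max (Pb n b (↑i + 1)) h - max (Pb n b ↑i) h) =
          ∑ k ∈ Finset.range n, (max (Pb n b (k + 1)) h - max (Pb n b k) h) :=
        Fin.sum_univ_eq_sum_range (fun k => max (Pb n b (k + 1)) h - max (Pb n b k) h) n
      show 2 * ∑ i : Fin n, (max (Pb n b (↑i + 1)) h - max (Pb n b ↑i) h) = ∑ i, b i
      rw [h1, sum_prefix_c, Pb_top]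
      omega
    · intro i
      have hle : ∑ j ∈ Finset.univ.filter (fun j => j ≤ i),
            (max (Pb n b (↑j + 1)) h - max (Pb n b ↑j) h) =
          max (Pb n b (↑i + 1)) h - h := by
        have hfilt : Finset.univ.filter (fun j : Fin n => j ≤ i) =
            Finset.univ.filter (fun j : Fin n => (j : ℕ) < ↑i + 1) := by
          ext j
          simp only [Finset.mem_filter, Finset.mem_univ, true_and, Fin.le_def,
            Nat.lt_succ_iff]
        rw [hfilt,
          sum_filter_val_lt (fun k => max (Pb n b (k + 1)) h - max (Pb n b k) h) (↑i + 1) i.isLt,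
          sum_prefix_c]
      have hlt : ∑ j ∈ Finset.univ.filter (fun j => j < i), b j = Pb n b ↑i := by
        have hfilt : Finset.univ.filter (fun j : Fin n => j < i) =
            Finset.univ.filter (fun j : Fin n => (j : ℕ) < ↑i) := by
          ext j
          simp only [Finset.mem_filter, Finset.mem_univ, true_and, Fin.lt_def]
        rw [hfilt]
        calc ∑ j ∈ Finset.univ.filter (fun j : Fin n => (j : ℕ) < ↑i), b j
            = ∑ j ∈ Finset.univ.filter (fun j : Fin n => (j : ℕ) < ↑i),
                (if hk : (j : ℕ) < n then b ⟨↑j, hk⟩ else 0) :=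
              Finset.sum_congr rfl (fun j _ => by simp [j.isLt])
          _ = ∑ k ∈ Finset.range ↑i, (if hk : k < n then b ⟨k, hk⟩ else 0) :=
              sum_filter_val_lt (fun k => if hk : k < n then b ⟨k, hk⟩ else 0) ↑i (le_of_lt i.isLt)
          _ = Pb n b ↑i := rfl
      show 2 * ∑ j ∈ Finset.univ.filter (fun j => j ≤ i),
            (max (Pb n b (↑j + 1)) h - max (Pb n b ↑j) h) ≤
          (max (Pb n b (↑i + 1)) h - max (Pb n b ↑i) h) +
            ∑ j ∈ Finset.univ.filter (fun j => j < i), b j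
      rw [hle, hlt]
      have h1 := Pb_succ n b i
      have h2 : Pb n b (↑i + 1) ≤ ∑ j, b j := Pb_top n b ▸ Pb_mono n b i.isLt
      have h3 := hb i
      omega
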